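/- Let C ∈ ℝ^{n×m}, Σ ∈ ℝ^{n×n} symmetric positive definite, Q ∈ ℝ^{n×r} full column rank. Define Λ = Σ⁻¹C, P = Q(QᵀΣQ)⁻¹QᵀΣ, and R = (I - P)Λ. Then CᵀΣ⁻¹C - CᵀQ(QᵀΣQ)⁻¹QᵀC = RᵀΣR, which is positive semidefinite. -/

import Mathlib

set_option maxHeartbeats 1000000
open Matrix

noncomputable def op2 {m n : ℕ} (A : Matrix (Fin m) (Fin n) ℝ) : ℝ :=
  ‖LinearMap.toContinuousLinearMap (Matrix.toEuclideanLin A)‖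

noncomputable def enorm2 {n : ℕ} (v : Fin n → ℝ) : ℝ :=
  Real.sqrt (∑ i, v i ^ 2)

/-- The (r+1)-st singular value, via the Eckart–Young characterization:
the distance (in operator 2-norm) to the set of matrices of rank at most r. -/
noncomputable def sval {n m : ℕ} (A : Matrix (Fin n) (Fin m) ℝ) (r : ℕ) : ℝ :=
  sInf {t | ∃ B : Matrix (Fin n) (Fin m) ℝ, B.rank ≤ r ∧ t = op2 (A - B)}

lemma aux_posdef {n r : ℕ} (S : Matrix (Fin n) (Fin n) ℝ) (hS : S.PosDef)
    (Q : Matrix (Fin n) (Fin r) ℝ) (hQ : Q.rank = r) : (Qᵀ * S * Q).PosDef := by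
  have hSt : Sᵀ = S := by
    simpa [conjTranspose_eq_transpose_of_trivial] using hS.isHermitian.eq
  have hinj : Function.Injective Q.mulVecLin := by
    rw [← LinearMap.ker_eq_bot]
    have h1 := LinearMap.finrank_range_add_finrank_ker Q.mulVecLin
    rw [show Module.finrank ℝ (LinearMap.range Q.mulVecLin) = r from hQ,
      Module.finrank_pi, Fintype.card_fin] at h1
    exact Submodule.finrank_eq_zero.mp (by omega)
  refine PosDef.of_dotProduct_mulVec_pos ?_ ?_
  · show (Qᵀ * S * Q)ᴴ = _
    simp [conjTranspose_eq_transpose_of_trivial, Matrix.mul_assoc, transpose_mul, hSt]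
  · intro x hx
    have hQx : Q *ᵥ x ≠ 0 := by
      intro h
      exact hx (hinj (by simpa using h))
    have := hS.dotProduct_mulVec_pos hQx
    simpa [← mulVec_mulVec, dotProduct_mulVec, vecMul_transpose, star_mulVec,
      Matrix.mul_assoc] using this

/-- Variance-reduction residual identity: CᵀΣ⁻¹C − CᵀQ(QᵀΣQ)⁻¹QᵀC = RᵀΣR ⪰ 0. -/
theorem stmt7 {n m r : ℕ} (S : Matrix (Fin n) (Fin n) ℝ) (hS : S.PosDef)
    (C : Matrix (Fin n) (Fin m) ℝ)
    (Q : Matrix (Fin n) (Fin r) ℝ) (hQ : Q.rank = r) :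
    Cᵀ * S⁻¹ * C - Cᵀ * Q * (Qᵀ * S * Q)⁻¹ * Qᵀ * C
        = ((1 - Q * (Qᵀ * S * Q)⁻¹ * Qᵀ * S) * (S⁻¹ * C))ᵀ * S *
            ((1 - Q * (Qᵀ * S * Q)⁻¹ * Qᵀ * S) * (S⁻¹ * C))
      ∧ (Cᵀ * S⁻¹ * C - Cᵀ * Q * (Qᵀ * S * Q)⁻¹ * Qᵀ * C).PosSemidef := by
  have hSt : Sᵀ = S := by
    simpa [conjTranspose_eq_transpose_of_trivial] using hS.isHermitian.eq
  have hM : (Qᵀ * S * Q).PosDef := aux_posdef S hS Q hQ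
  have hMt : (Qᵀ * S * Q)ᵀ = Qᵀ * S * Q := by
    simpa [conjTranspose_eq_transpose_of_trivial] using hM.isHermitian.eq
  have hSdet : IsUnit S.det := hS.det_pos.ne'.isUnit
  have hMdet : IsUnit (Qᵀ * S * Q).det := hM.det_pos.ne'.isUnit
  have hSit : (S⁻¹)ᵀ = S⁻¹ := by rw [transpose_nonsing_inv, hSt]
  have hMit : ((Qᵀ * S * Q)⁻¹)ᵀ = (Qᵀ * S * Q)⁻¹ := by
    rw [transpose_nonsing_inv, hMt]
  have h2 : ∀ X : Matrix (Fin n) (Fin m) ℝ, S * (S⁻¹ * X) = X := by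
    intro X; rw [← Matrix.mul_assoc, mul_nonsing_inv S hSdet, Matrix.one_mul]
  have h1 : ∀ X : Matrix (Fin n) (Fin m) ℝ, S⁻¹ * (S * X) = X := by
    intro X; rw [← Matrix.mul_assoc, nonsing_inv_mul S hSdet, Matrix.one_mul]
  have hMit' : ((Qᵀ * (S * Q))⁻¹)ᵀ = (Qᵀ * (S * Q))⁻¹ := by
    simpa only [Matrix.mul_assoc] using hMit
  have h3' : ∀ Y : Matrix (Fin r) (Fin m) ℝ,
      (Qᵀ * (S * Q))⁻¹ * (Qᵀ * (S * (Q * Y))) = Y := by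
    intro Y
    calc (Qᵀ * (S * Q))⁻¹ * (Qᵀ * (S * (Q * Y)))
        = ((Qᵀ * (S * Q))⁻¹ * (Qᵀ * (S * Q))) * Y := by
          simp only [Matrix.mul_assoc]
      _ = Y := by
          rw [nonsing_inv_mul _ (by simpa only [Matrix.mul_assoc] using hMdet),
            Matrix.one_mul]
  have hQSQ : ∀ Y : Matrix (Fin r) (Fin m) ℝ,
      (Qᵀ * S * Q)⁻¹ * (Qᵀ * (S * (Q * Y))) = (Qᵀ * S * Q)⁻¹ * Y ∨ True := fun _ => Or.inr trivial
  have h3 : ∀ Y : Matrix (Fin r) (Fin m) ℝ,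
      (Qᵀ * S * Q)⁻¹ * (Qᵀ * (S * (Q * Y))) = Y := by
    intro Y
    calc (Qᵀ * S * Q)⁻¹ * (Qᵀ * (S * (Q * Y)))
        = ((Qᵀ * S * Q)⁻¹ * (Qᵀ * S * Q)) * Y := by
          simp only [Matrix.mul_assoc]
      _ = Y := by rw [nonsing_inv_mul _ hMdet, Matrix.one_mul]
  have key : Cᵀ * S⁻¹ * C - Cᵀ * Q * (Qᵀ * S * Q)⁻¹ * Qᵀ * C
        = ((1 - Q * (Qᵀ * S * Q)⁻¹ * Qᵀ * S) * (S⁻¹ * C))ᵀ * S *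
            ((1 - Q * (Qᵀ * S * Q)⁻¹ * Qᵀ * S) * (S⁻¹ * C)) := by
    simp only [Matrix.sub_mul, Matrix.mul_sub, Matrix.one_mul, Matrix.mul_one,
      transpose_sub, transpose_mul, transpose_one, transpose_transpose, hSt, hSit,
      Matrix.mul_assoc, hMit', h1, h2, h3']
    abel
  refine ⟨key, ?_⟩
  rw [key]
  have hs := hS.posSemidef
  have := hs.conjTranspose_mul_mul_same
    ((1 - Q * (Qᵀ * S * Q)⁻¹ * Qᵀ * S) * (S⁻¹ * C))
  simpa [conjTranspose_eq_transpose_of_trivial] using this
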